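/- Let k > 0 be a real number with 0.558·ln k ≥ 1 and set L = ⌊0.558·ln k⌋. For every nonzero a ∈ ℝ^{L+1}, the function λ ↦ g(a,λ) is differentiable on (0,∞) and its derivative in λ is strictly negative at every λ ≥ 6.5·L; consequently λ ↦ g(a,λ) is strictly decreasing on [6.5·L, ∞). -/

import Mathlib

set_option maxHeartbeats 1000000

open Real Finset

/-- The objective function `g(a, λ)` of the regularized weighted Chebyshev problem. -/
noncomputable def gObj {L : ℕ} (k : ℝ) (a : Fin (L + 1) → ℝ) (lam : ℝ) : ℝ :=
  (1 / k) * ∑ l : Fin (L + 1), Real.exp (-lam) * (a l) ^ 2 * lam ^ (l : ℕ) * (Nat.factorial (l : ℕ) : ℝ) +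
    (Real.exp (-lam) * ∑ l : Fin (L + 1), a l * lam ^ (l : ℕ)) ^ 2

private lemma fact_le_mul_pow (n m : ℕ) : Nat.factorial (n + m) ≤ Nat.factorial n * (n + m) ^ m := by
  induction m with
  | zero => simp
  | succ m ih =>
    have h : n + (m + 1) = (n + m) + 1 := by omega
    rw [h, Nat.factorial_succ]
    calc (n + m + 1) * Nat.factorial (n + m) ≤ (n + m + 1) * (Nat.factorial n * (n + m) ^ m) :=
          Nat.mul_le_mul_left _ ih
      _ ≤ (n + m + 1) * (Nat.factorial n * (n + m + 1) ^ m) :=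
          Nat.mul_le_mul_left _ (Nat.mul_le_mul_left _ (Nat.pow_le_pow_left (Nat.le_succ _) m))
      _ = Nat.factorial n * (n + m + 1) ^ (m + 1) := by ring

private lemma gObj_hasDerivAt {L : ℕ} (k : ℝ) (a : Fin (L + 1) → ℝ) (x : ℝ) :
    HasDerivAt (gObj k a)
      ((1 / k) * (Real.exp (-x) * (-1) * (∑ l : Fin (L + 1), (a l) ^ 2 * x ^ (l : ℕ) * (Nat.factorial (l : ℕ) : ℝ))
          + Real.exp (-x) * (∑ l : Fin (L + 1), (a l) ^ 2 * (((l : ℕ) : ℝ) * x ^ ((l : ℕ) - 1)) * (Nat.factorial (l : ℕ) : ℝ)))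
        + 2 * (Real.exp (-x) * ∑ l : Fin (L + 1), a l * x ^ (l : ℕ))
            * (Real.exp (-x) * (-1) * (∑ l : Fin (L + 1), a l * x ^ (l : ℕ))
              + Real.exp (-x) * (∑ l : Fin (L + 1), a l * (((l : ℕ) : ℝ) * x ^ ((l : ℕ) - 1))))) x := by
  have hE : HasDerivAt (fun y : ℝ => Real.exp (-y)) (Real.exp (-x) * (-1)) x := (hasDerivAt_neg x).exp
  have hS : HasDerivAt (fun y : ℝ => ∑ l : Fin (L + 1), (a l) ^ 2 * y ^ (l : ℕ) * (Nat.factorial (l : ℕ) : ℝ))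
      (∑ l : Fin (L + 1), (a l) ^ 2 * (((l : ℕ) : ℝ) * x ^ ((l : ℕ) - 1)) * (Nat.factorial (l : ℕ) : ℝ)) x :=
    HasDerivAt.fun_sum fun l _ => ((hasDerivAt_pow (l : ℕ) x).const_mul ((a l) ^ 2)).mul_const _
  have hp : HasDerivAt (fun y : ℝ => ∑ l : Fin (L + 1), a l * y ^ (l : ℕ))
      (∑ l : Fin (L + 1), a l * (((l : ℕ) : ℝ) * x ^ ((l : ℕ) - 1))) x :=
    HasDerivAt.fun_sum fun l _ => (hasDerivAt_pow (l : ℕ) x).const_mul (a l)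
  have h := ((hE.fun_mul hS).const_mul (1 / k)).fun_add ((hE.fun_mul hp).fun_pow 2)
  have hfun : gObj k a = fun y : ℝ => (1 / k) * (Real.exp (-y) * ∑ l : Fin (L + 1), (a l) ^ 2 * y ^ (l : ℕ) * (Nat.factorial (l : ℕ) : ℝ)) + (Real.exp (-y) * ∑ l : Fin (L + 1), a l * y ^ (l : ℕ)) ^ 2 := by
    funext y
    unfold gObj
    conv_rhs => rw [Finset.mul_sum]
    congr 2
    exact Finset.sum_congr rfl fun l _ => by ring
  rw [hfun]
  refine h.congr_deriv ?_
  push_cast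
  ring

theorem stmt_1 (k : ℝ) (hk : 0 < k) (hlog : 1 ≤ 0.558 * Real.log k)
    (L : ℕ) (hL : L = ⌊0.558 * Real.log k⌋₊)
    (a : Fin (L + 1) → ℝ) (ha : a ≠ 0) :
    (∀ lam : ℝ, 0 < lam → DifferentiableAt ℝ (gObj k a) lam) ∧
    (∀ lam : ℝ, 6.5 * L ≤ lam → deriv (gObj k a) lam < 0) ∧
    StrictAntiOn (gObj k a) (Set.Ici (6.5 * L)) := by
  have hk' : k ≠ 0 := ne_of_gt hk
  have hdiff : ∀ lam : ℝ, DifferentiableAt ℝ (gObj k a) lam :=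
    fun lam => (gObj_hasDerivAt k a lam).differentiableAt
  have hL1 : 1 ≤ L := by
    rw [hL]
    exact Nat.le_floor (by exact_mod_cast hlog)
  have hL1' : (1:ℝ) ≤ (L:ℝ) := by exact_mod_cast hL1
  have hkub : k < Real.exp (((L:ℝ) + 1) / 0.558) := by
    have h1 : 0.558 * Real.log k < (L:ℝ) + 1 := by
      rw [hL]
      exact_mod_cast Nat.lt_floor_add_one (0.558 * Real.log k)
    have h2 : Real.log k < ((L:ℝ) + 1) / 0.558 := by
      rw [lt_div_iff₀ (by norm_num : (0:ℝ) < 0.558)]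
      linarith
    calc k = Real.exp (Real.log k) := (Real.exp_log hk).symm
      _ < _ := Real.exp_lt_exp.mpr h2
  -- the key numeric inequality
  have hnum : k * ((6.5 * (L:ℝ)) ^ L * Real.exp (-(6.5 * (L:ℝ)))) / (Nat.factorial L : ℝ) < 121 / 338 := by
    rcases eq_or_lt_of_le hL1 with h1 | h2
    · -- L = 1
      subst h1
      have hkub' : k < Real.exp (2 / 0.558) := by
        convert hkub using 3
        norm_num
      have hs : (2197/121 : ℝ) ≤ Real.exp (1627/558) := by
        have h10 := Real.sum_le_exp_of_nonneg (show (0:ℝ) ≤ 1627/558 by norm_num) 10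
        refine le_trans ?_ h10
        norm_num [Finset.sum_range_succ, Nat.factorial]
      have hprod : Real.exp (-(1627/558 : ℝ)) * Real.exp (1627/558) = 1 := by
        rw [← Real.exp_add]; norm_num
      have hinv : Real.exp (-(1627/558 : ℝ)) ≤ 121/2197 := by
        have h3 := mul_le_mul_of_nonneg_left hs (Real.exp_pos (-(1627/558 : ℝ))).le
        rw [hprod] at h3
        nlinarith [Real.exp_pos (-(1627/558 : ℝ))]
      have key : Real.exp (2/0.558) * (6.5 * Real.exp (-(6.5:ℝ))) ≤ 121/338 := by
        have he : Real.exp (2/0.558) * Real.exp (-(6.5:ℝ)) = Real.exp (-(1627/558 : ℝ)) := by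
          rw [← Real.exp_add]; norm_num
        calc Real.exp (2/0.558) * (6.5 * Real.exp (-(6.5:ℝ)))
            = 6.5 * (Real.exp (2/0.558) * Real.exp (-(6.5:ℝ))) := by ring
          _ = 6.5 * Real.exp (-(1627/558 : ℝ)) := by rw [he]
          _ ≤ 6.5 * (121/2197) := by linarith
          _ = 121/338 := by norm_num
      have hpos : (0:ℝ) < 6.5 * Real.exp (-(6.5:ℝ)) := by positivity
      calc k * ((6.5 * ((1:ℕ):ℝ)) ^ (1:ℕ) * Real.exp (-(6.5 * ((1:ℕ):ℝ)))) / (Nat.factorial 1 : ℝ)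
          = k * (6.5 * Real.exp (-(6.5:ℝ))) := by norm_num
        _ < Real.exp (2/0.558) * (6.5 * Real.exp (-(6.5:ℝ))) := mul_lt_mul_of_pos_right hkub' hpos
        _ ≤ 121/338 := key
    · -- L ≥ 2
      have hL2 : (2:ℝ) ≤ (L:ℝ) := by exact_mod_cast h2
      have hfacL : ((L:ℝ)) ^ L / (Nat.factorial L : ℝ) ≤ Real.exp (L:ℝ) := by
        have h1 : ((L:ℝ)) ^ L / (Nat.factorial L : ℝ) ≤ ∑ i ∈ range (L+1), (L:ℝ)^i / (Nat.factorial i : ℝ) :=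
          Finset.single_le_sum (f := fun i => (L:ℝ)^i / (Nat.factorial i : ℝ)) (fun i _ => by positivity)
            (Finset.self_mem_range_succ L)
        exact h1.trans (Real.sum_le_exp_of_nonneg (Nat.cast_nonneg L) _)
      have h65 : (6.5:ℝ) ≤ Real.exp 1.88 := by
        have h7 := Real.sum_le_exp_of_nonneg (show (0:ℝ) ≤ 1.88 by norm_num) 7
        refine le_trans ?_ h7
        norm_num [Finset.sum_range_succ, Nat.factorial]
      have h65L : (6.5:ℝ)^L ≤ Real.exp (1.88 * (L:ℝ)) := by
        calc (6.5:ℝ)^L ≤ (Real.exp 1.88)^L := pow_le_pow_left₀ (by norm_num) h65 L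
          _ = Real.exp ((L:ℝ) * 1.88) := (Real.exp_nat_mul 1.88 L).symm
          _ = Real.exp (1.88 * (L:ℝ)) := by rw [mul_comm]
      have hexp104 : Real.exp (-(1.04:ℝ)) < 121/338 := by
        have hs : (338/121:ℝ) < Real.exp 1.04 := by
          have h6 := Real.sum_le_exp_of_nonneg (show (0:ℝ) ≤ 1.04 by norm_num) 6
          refine lt_of_lt_of_le ?_ h6
          norm_num [Finset.sum_range_succ, Nat.factorial]
        have hprod : Real.exp (-(1.04:ℝ)) * Real.exp 1.04 = 1 := by
          rw [← Real.exp_add]; norm_num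
        nlinarith [Real.exp_pos (-(1.04:ℝ)), hs, hprod]
      have hfL : (0:ℝ) < (Nat.factorial L : ℝ) := by exact_mod_cast L.factorial_pos
      have hstep : ((L:ℝ) + 1) / 0.558 + (1.88 * (L:ℝ) + (L:ℝ) + -(6.5 * (L:ℝ))) ≤ -1.04 := by
        have hd : ((L:ℝ) + 1) / 0.558 = ((L:ℝ) + 1) * (1000 / 558) := by ring
        rw [hd]
        nlinarith [hL2]
      calc k * ((6.5 * (L:ℝ)) ^ L * Real.exp (-(6.5 * (L:ℝ)))) / (Nat.factorial L : ℝ)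
          = k * ((6.5:ℝ)^L * (((L:ℝ))^L / (Nat.factorial L : ℝ)) * Real.exp (-(6.5 * (L:ℝ)))) := by
            rw [mul_pow]; field_simp
        _ ≤ k * (Real.exp (1.88 * (L:ℝ)) * Real.exp ((L:ℝ)) * Real.exp (-(6.5 * (L:ℝ)))) := by
            apply mul_le_mul_of_nonneg_left _ hk.le
            apply mul_le_mul_of_nonneg_right _ (Real.exp_pos _).le
            apply mul_le_mul h65L hfacL (by positivity) (Real.exp_pos _).le
        _ < Real.exp (((L:ℝ) + 1) / 0.558) * (Real.exp (1.88 * (L:ℝ)) * Real.exp ((L:ℝ)) * Real.exp (-(6.5 * (L:ℝ)))) := by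
            apply mul_lt_mul_of_pos_right hkub (by positivity)
        _ = Real.exp (((L:ℝ) + 1) / 0.558 + (1.88 * (L:ℝ) + (L:ℝ) + -(6.5 * (L:ℝ)))) := by
            rw [← Real.exp_add, ← Real.exp_add, ← Real.exp_add]
        _ ≤ Real.exp (-1.04) := Real.exp_le_exp.mpr hstep
        _ < 121/338 := hexp104
  have hneg : ∀ lam : ℝ, 6.5 * L ≤ lam → deriv (gObj k a) lam < 0 := by
    intro lam hlam
    have hlam0 : 0 < lam := by nlinarith [hL1']
    have hlamL : (L:ℝ) ≤ lam := by nlinarith [hL1']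
    have hD := (gObj_hasDerivAt k a lam).deriv
    set E := Real.exp (-lam) with hEdef
    set S := ∑ l : Fin (L+1), (a l)^2 * lam ^ (l:ℕ) * (Nat.factorial (l:ℕ) : ℝ) with hSdef
    set S' := ∑ l : Fin (L+1), (a l)^2 * (((l:ℕ):ℝ) * lam ^ ((l:ℕ)-1)) * (Nat.factorial (l:ℕ) : ℝ) with hS'def
    set p := ∑ l : Fin (L+1), a l * lam ^ (l:ℕ) with hpdef
    set p' := ∑ l : Fin (L+1), a l * (((l:ℕ):ℝ) * lam ^ ((l:ℕ)-1)) with hp'def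
    set Q := ∑ l : Fin (L+1), lam ^ (l:ℕ) / (Nat.factorial (l:ℕ) : ℝ) with hQdef
    have hEpos : 0 < E := Real.exp_pos _
    obtain ⟨i, hi⟩ : ∃ i, a i ≠ 0 := by
      by_contra h
      push_neg at h
      exact ha (funext fun i => h i)
    have hSpos : 0 < S := by
      rw [hSdef]
      refine Finset.sum_pos' (fun l _ => ?_) ⟨i, Finset.mem_univ i, ?_⟩
      · exact mul_nonneg (mul_nonneg (sq_nonneg _) (pow_nonneg hlam0.le _)) (Nat.cast_nonneg _)
      · have h1 : 0 < (a i)^2 := lt_of_le_of_ne (sq_nonneg _) (Ne.symm (pow_ne_zero 2 hi))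
        have h3 : (0:ℝ) < (Nat.factorial (i:ℕ) : ℝ) := by exact_mod_cast (i:ℕ).factorial_pos
        exact mul_pos (mul_pos h1 (pow_pos hlam0 _)) h3
    have hlle : ∀ l : Fin (L+1), ((l:ℕ):ℝ) ≤ (L:ℝ) := fun l => by
      exact_mod_cast Nat.lt_succ_iff.mp l.isLt
    have hllam : ∀ l : Fin (L+1), ((l:ℕ):ℝ) ≤ lam := fun l => le_trans (hlle l) hlamL
    have hpow_succ : ∀ l : Fin (L+1), 0 < (l:ℕ) → lam ^ (l:ℕ) = lam * lam ^ ((l:ℕ)-1) := by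
      intro l h1
      conv_lhs => rw [show (l:ℕ) = ((l:ℕ)-1)+1 from (Nat.succ_pred_eq_of_pos h1).symm]
      rw [pow_succ']
    have hc1 : lam * S' ≤ (L:ℝ) * S := by
      rw [hS'def, hSdef, Finset.mul_sum, Finset.mul_sum]
      refine Finset.sum_le_sum fun l _ => ?_
      rcases Nat.eq_zero_or_pos (l:ℕ) with h0 | h1
      · rw [h0]
        simp only [Nat.cast_zero, zero_mul, mul_zero, zero_mul, pow_zero, Nat.factorial_zero,
          Nat.cast_one, mul_one]
        positivity
      · calc lam * ((a l)^2 * (((l:ℕ):ℝ) * lam ^ ((l:ℕ)-1)) * (Nat.factorial (l:ℕ):ℝ))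
            = ((l:ℕ):ℝ) * ((a l)^2 * (lam * lam ^ ((l:ℕ)-1)) * (Nat.factorial (l:ℕ):ℝ)) := by ring
          _ = ((l:ℕ):ℝ) * ((a l)^2 * lam ^ (l:ℕ) * (Nat.factorial (l:ℕ):ℝ)) := by
              rw [← hpow_succ l h1]
          _ ≤ (L:ℝ) * ((a l)^2 * lam ^ (l:ℕ) * (Nat.factorial (l:ℕ):ℝ)) := by
              refine mul_le_mul_of_nonneg_right (hlle l) ?_
              exact mul_nonneg (mul_nonneg (sq_nonneg _) (pow_nonneg hlam0.le _)) (Nat.cast_nonneg _)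
    have hS'S : S' - S ≤ -(11/13) * S := by
      have h2 : lam * S' ≤ (2/13) * lam * S := by
        refine hc1.trans ?_
        nlinarith [hSpos.le]
      have h3 : S' ≤ (2/13) * S := by
        have h4 : lam * S' ≤ lam * ((2/13) * S) := by linarith
        exact le_of_mul_le_mul_left h4 hlam0
      linarith
    have hApos : ∀ l : Fin (L+1), (0:ℝ) < lam ^ (l:ℕ) * (Nat.factorial (l:ℕ) : ℝ) := fun l =>
      mul_pos (pow_pos hlam0 _) (by exact_mod_cast (l:ℕ).factorial_pos)
    have e2 : ∑ l : Fin (L+1), (a l * Real.sqrt (lam ^ (l:ℕ) * (Nat.factorial (l:ℕ) : ℝ)))^2 = S := by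
      rw [hSdef]
      refine Finset.sum_congr rfl fun l _ => ?_
      rw [mul_pow, Real.sq_sqrt (hApos l).le]
      ring
    have hc2 : p^2 ≤ S * Q := by
      have key := Finset.sum_mul_sq_le_sq_mul_sq Finset.univ
        (fun l : Fin (L+1) => a l * Real.sqrt (lam ^ (l:ℕ) * (Nat.factorial (l:ℕ) : ℝ)))
        (fun l : Fin (L+1) => Real.sqrt (lam ^ (l:ℕ) / (Nat.factorial (l:ℕ) : ℝ)))
      have e1 : ∑ l : Fin (L+1), (a l * Real.sqrt (lam ^ (l:ℕ) * (Nat.factorial (l:ℕ) : ℝ))) * Real.sqrt (lam ^ (l:ℕ) / (Nat.factorial (l:ℕ) : ℝ)) = p := by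
        rw [hpdef]
        refine Finset.sum_congr rfl fun l _ => ?_
        rw [mul_assoc, ← Real.sqrt_mul (hApos l).le]
        have hf : (Nat.factorial (l:ℕ) : ℝ) ≠ 0 := by exact_mod_cast (Nat.factorial_pos _).ne'
        rw [show lam ^ (l:ℕ) * (Nat.factorial (l:ℕ) : ℝ) * (lam ^ (l:ℕ) / (Nat.factorial (l:ℕ) : ℝ)) = (lam ^ (l:ℕ))^2 by field_simp]
        rw [Real.sqrt_sq (pow_nonneg hlam0.le _)]
      have e3 : ∑ l : Fin (L+1), (Real.sqrt (lam ^ (l:ℕ) / (Nat.factorial (l:ℕ) : ℝ)))^2 = Q := by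
        rw [hQdef]
        refine Finset.sum_congr rfl fun l _ => ?_
        exact Real.sq_sqrt (div_nonneg (pow_nonneg hlam0.le _) (Nat.cast_nonneg _))
      rw [e1, e2, e3] at key
      exact key
    have hc3 : (p' - p)^2 ≤ S * Q := by
      have key := Finset.sum_mul_sq_le_sq_mul_sq Finset.univ
        (fun l : Fin (L+1) => a l * Real.sqrt (lam ^ (l:ℕ) * (Nat.factorial (l:ℕ) : ℝ)))
        (fun l : Fin (L+1) => (((l:ℕ):ℝ) * lam ^ ((l:ℕ)-1) - lam ^ (l:ℕ)) / Real.sqrt (lam ^ (l:ℕ) * (Nat.factorial (l:ℕ) : ℝ)))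
      have e1 : ∑ l : Fin (L+1), (a l * Real.sqrt (lam ^ (l:ℕ) * (Nat.factorial (l:ℕ) : ℝ))) * ((((l:ℕ):ℝ) * lam ^ ((l:ℕ)-1) - lam ^ (l:ℕ)) / Real.sqrt (lam ^ (l:ℕ) * (Nat.factorial (l:ℕ) : ℝ))) = p' - p := by
        rw [hp'def, hpdef, ← Finset.sum_sub_distrib]
        refine Finset.sum_congr rfl fun l _ => ?_
        have hs : Real.sqrt (lam ^ (l:ℕ) * (Nat.factorial (l:ℕ) : ℝ)) ≠ 0 :=
          ne_of_gt (Real.sqrt_pos.mpr (hApos l))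
        field_simp
      have e3 : ∑ l : Fin (L+1), ((((l:ℕ):ℝ) * lam ^ ((l:ℕ)-1) - lam ^ (l:ℕ)) / Real.sqrt (lam ^ (l:ℕ) * (Nat.factorial (l:ℕ) : ℝ)))^2 ≤ Q := by
        rw [hQdef]
        refine Finset.sum_le_sum fun l _ => ?_
        have hd2 : (((l:ℕ):ℝ) * lam ^ ((l:ℕ)-1) - lam ^ (l:ℕ))^2 ≤ (lam ^ (l:ℕ))^2 := by
          rcases Nat.eq_zero_or_pos (l:ℕ) with h0 | h1
          · rw [h0]; norm_num
          · rw [hpow_succ l h1]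
            have hll : ((l:ℕ):ℝ) ≤ lam := hllam l
            have hl0 : (0:ℝ) ≤ ((l:ℕ):ℝ) := Nat.cast_nonneg _
            have key2 : (((l:ℕ):ℝ) - lam)^2 ≤ lam^2 := by nlinarith [hll, hl0]
            calc (((l:ℕ):ℝ) * lam ^ ((l:ℕ)-1) - lam * lam ^ ((l:ℕ)-1))^2
                = (((l:ℕ):ℝ) - lam)^2 * (lam ^ ((l:ℕ)-1))^2 := by ring
              _ ≤ lam^2 * (lam ^ ((l:ℕ)-1))^2 := mul_le_mul_of_nonneg_right key2 (sq_nonneg _)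
              _ = (lam * lam ^ ((l:ℕ)-1))^2 := by ring
        have heq : (lam ^ (l:ℕ))^2 / (lam ^ (l:ℕ) * (Nat.factorial (l:ℕ) : ℝ)) = lam ^ (l:ℕ) / (Nat.factorial (l:ℕ) : ℝ) := by
          rw [sq, mul_div_mul_left _ _ (ne_of_gt (pow_pos hlam0 (l:ℕ)))]
        rw [div_pow, Real.sq_sqrt (hApos l).le, ← heq]
        exact (div_le_div_iff_of_pos_right (hApos l)).mpr hd2
      rw [e1, e2] at key
      exact key.trans (mul_le_mul_of_nonneg_left e3 hSpos.le)
    have hc4 : p * (p' - p) ≤ S * Q := by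
      nlinarith [sq_nonneg (p - (p' - p)), hc2, hc3]
    have hQle : Q ≤ 13/11 * (lam ^ L / (Nat.factorial L : ℝ)) := by
      have hterm : ∀ l : Fin (L+1), lam ^ (l:ℕ) / (Nat.factorial (l:ℕ) : ℝ) ≤ (2/13:ℝ)^(L - (l:ℕ)) * (lam ^ L / (Nat.factorial L : ℝ)) := by
        intro l
        have hlL : (l:ℕ) ≤ L := Nat.lt_succ_iff.mp l.isLt
        have hfac : ((Nat.factorial L : ℝ)) ≤ (Nat.factorial (l:ℕ) : ℝ) * (L:ℝ)^(L - (l:ℕ)) := by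
          have h := fact_le_mul_pow (l:ℕ) (L - (l:ℕ))
          rw [Nat.add_sub_cancel' hlL] at h
          exact_mod_cast h
        have hL2lam : (L:ℝ) ≤ 2/13 * lam := by linarith
        have h2 : (L:ℝ)^(L-(l:ℕ)) ≤ (2/13 * lam)^(L-(l:ℕ)) :=
          pow_le_pow_left₀ (Nat.cast_nonneg _) hL2lam _
        have hfl : (0:ℝ) < (Nat.factorial (l:ℕ) : ℝ) := by exact_mod_cast (l:ℕ).factorial_pos
        have hfL : (0:ℝ) < (Nat.factorial L : ℝ) := by exact_mod_cast L.factorial_pos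
        rw [div_le_iff₀ hfl, mul_comm ((2/13:ℝ)^(L - (l:ℕ))) _, mul_assoc, div_mul_eq_mul_div, le_div_iff₀ hfL]
        calc lam ^ (l:ℕ) * (Nat.factorial L : ℝ)
            ≤ lam ^ (l:ℕ) * ((Nat.factorial (l:ℕ) : ℝ) * (2/13 * lam)^(L-(l:ℕ))) := by
              refine mul_le_mul_of_nonneg_left (hfac.trans ?_) (pow_nonneg hlam0.le _)
              exact mul_le_mul_of_nonneg_left h2 hfl.le
          _ = lam ^ L * ((2/13:ℝ)^(L - (l:ℕ)) * (Nat.factorial (l:ℕ) : ℝ)) := by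
              rw [mul_pow, show lam ^ (l:ℕ) * ((Nat.factorial (l:ℕ) : ℝ) * ((2/13:ℝ)^(L-(l:ℕ)) * lam^(L-(l:ℕ)))) = (2/13:ℝ)^(L-(l:ℕ)) * (lam^(l:ℕ) * lam^(L-(l:ℕ))) * (Nat.factorial (l:ℕ) : ℝ) from by ring, ← pow_add, Nat.add_sub_cancel' hlL]
              ring
      calc Q ≤ ∑ l : Fin (L+1), (2/13:ℝ)^(L-(l:ℕ)) * (lam^L / (Nat.factorial L : ℝ)) := by
            rw [hQdef]; exact Finset.sum_le_sum fun l _ => hterm l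
        _ = (∑ l : Fin (L+1), (2/13:ℝ)^(L-(l:ℕ))) * (lam^L/(Nat.factorial L : ℝ)) := by
            rw [← Finset.sum_mul]
        _ ≤ 13/11 * (lam^L/(Nat.factorial L : ℝ)) := by
            refine mul_le_mul_of_nonneg_right ?_ (div_nonneg (pow_nonneg hlam0.le _) (Nat.cast_nonneg _))
            rw [Fin.sum_univ_eq_sum_range (fun i => (2/13:ℝ)^(L-i)) (L+1)]
            have hre : ∑ i ∈ range (L+1), (2/13:ℝ)^(L-i) = ∑ i ∈ range (L+1), (2/13:ℝ)^i := by
              have h := Finset.sum_range_reflect (fun j => (2/13:ℝ)^j) (L+1)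
              simpa using h
            rw [hre, geom_sum_eq (by norm_num : (2/13:ℝ) ≠ 1)]
            rw [div_le_iff_of_neg (by norm_num : (2/13:ℝ) - 1 < 0)]
            have h1 : (0:ℝ) ≤ (2/13:ℝ)^(L+1) := by positivity
            nlinarith
    have hfLpos : (0:ℝ) < (Nat.factorial L : ℝ) := by exact_mod_cast L.factorial_pos
    have hpowE : lam ^ L * E ≤ (6.5*(L:ℝ))^L * Real.exp (-(6.5*(L:ℝ))) := by
      have hc : (0:ℝ) < 6.5*(L:ℝ) := by linarith
      have h1 : lam / (6.5*(L:ℝ)) ≤ Real.exp (lam/(6.5*(L:ℝ)) - 1) := by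
        have h := Real.add_one_le_exp (lam/(6.5*(L:ℝ)) - 1)
        linarith
      have h2 : (lam/(6.5*(L:ℝ)))^L ≤ Real.exp ((L:ℝ) * (lam/(6.5*(L:ℝ)) - 1)) := by
        calc (lam/(6.5*(L:ℝ)))^L ≤ (Real.exp (lam/(6.5*(L:ℝ)) - 1))^L :=
              pow_le_pow_left₀ (div_nonneg hlam0.le hc.le) h1 L
          _ = Real.exp ((L:ℝ) * (lam/(6.5*(L:ℝ)) - 1)) := (Real.exp_nat_mul _ L).symm
      have h3 : (L:ℝ) * (lam/(6.5*(L:ℝ)) - 1) ≤ lam - 6.5*(L:ℝ) := by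
        have hL0 : (L:ℝ) ≠ 0 := by linarith
        have he : (L:ℝ) * (lam/(6.5*(L:ℝ))) = (2/13)*lam := by
          rw [mul_div_assoc']
          rw [show (6.5:ℝ)*(L:ℝ) = (L:ℝ) * (13/2) from by ring]
          rw [div_eq_iff (by positivity : ((L:ℝ) * (13/2)) ≠ 0)]
          ring
        rw [mul_sub, he, mul_one]
        linarith
      have h4 : (lam/(6.5*(L:ℝ)))^L ≤ Real.exp (lam - 6.5*(L:ℝ)) := h2.trans (Real.exp_le_exp.mpr h3)
      have hcL : (0:ℝ) < (6.5*(L:ℝ))^L := pow_pos hc L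
      have h5 : lam ^ L ≤ (6.5*(L:ℝ))^L * Real.exp (lam - 6.5*(L:ℝ)) := by
        have h6 := mul_le_mul_of_nonneg_left h4 hcL.le
        rw [div_pow, show (6.5*(L:ℝ))^L * (lam^L/(6.5*(L:ℝ))^L) = lam^L from by field_simp] at h6
        exact h6
      calc lam^L * E ≤ ((6.5*(L:ℝ))^L * Real.exp (lam - 6.5*(L:ℝ))) * E :=
            mul_le_mul_of_nonneg_right h5 hEpos.le
        _ = (6.5*(L:ℝ))^L * Real.exp (-(6.5*(L:ℝ))) := by
            rw [hEdef, mul_assoc, ← Real.exp_add]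
            congr 2
            ring
    have hnum2 : 26 * k * (Q * E) < 11 := by
      have hq1 : Q * E ≤ 13/11 * (k⁻¹ * (k * ((6.5*(L:ℝ))^L * Real.exp (-(6.5*(L:ℝ)))) / (Nat.factorial L : ℝ))) := by
        calc Q * E ≤ (13/11 * (lam ^ L / (Nat.factorial L : ℝ))) * E :=
              mul_le_mul_of_nonneg_right hQle hEpos.le
          _ = 13/11 * ((lam ^ L * E) / (Nat.factorial L : ℝ)) := by ring
          _ ≤ 13/11 * (((6.5*(L:ℝ))^L * Real.exp (-(6.5*(L:ℝ)))) / (Nat.factorial L : ℝ)) := by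
              refine mul_le_mul_of_nonneg_left ?_ (by norm_num)
              exact (div_le_div_iff_of_pos_right hfLpos).mpr hpowE
          _ = 13/11 * (k⁻¹ * (k * ((6.5*(L:ℝ))^L * Real.exp (-(6.5*(L:ℝ)))) / (Nat.factorial L : ℝ))) := by
              field_simp
      have h7 : k⁻¹ * (k * ((6.5*(L:ℝ))^L * Real.exp (-(6.5*(L:ℝ)))) / (Nat.factorial L : ℝ)) < k⁻¹ * (121/338) :=
        mul_lt_mul_of_pos_left hnum (inv_pos.mpr hk)
      have h8 : Q * E < 13/11 * (k⁻¹ * (121/338)) := by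
        refine lt_of_le_of_lt hq1 ?_
        exact mul_lt_mul_of_pos_left h7 (by norm_num)
      have h9 : 26 * k * (Q * E) < 26 * k * (13/11 * (k⁻¹ * (121/338))) := by
        refine mul_lt_mul_of_pos_left h8 ?_
        positivity
      have h10 : 26 * k * (13/11 * (k⁻¹ * (121/338))) = 11 := by
        field_simp
        ring
      linarith
    have hQpos : 0 < Q := by
      rw [hQdef]
      refine Finset.sum_pos (fun l _ => ?_) Finset.univ_nonempty
      exact div_pos (pow_pos hlam0 _) (by exact_mod_cast (l:ℕ).factorial_pos)
    rw [hD]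
    have e1 : (1/k) * (E*(-1)*S + E*S') + 2*(E*p)*(E*(-1)*p + E*p') = (E/k)*(S'-S) + (2*E^2)*(p*(p'-p)) := by
      ring
    rw [e1]
    have b1 : (E/k)*(S'-S) ≤ (E/k)*(-(11/13)*S) :=
      mul_le_mul_of_nonneg_left hS'S (by positivity)
    have b2 : (2*E^2)*(p*(p'-p)) ≤ (2*E^2)*(S*Q) :=
      mul_le_mul_of_nonneg_left hc4 (by positivity)
    have hfinal : (E/k)*(-(11/13)*S) + (2*E^2)*(S*Q) < 0 := by
      have heq : (E/k)*(-(11/13)*S) + (2*E^2)*(S*Q) = (E*S/(13*k)) * (26*k*(Q*E) - 11) := by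
        field_simp
        ring
      rw [heq]
      apply mul_neg_of_pos_of_neg
      · exact div_pos (mul_pos hEpos hSpos) (by linarith)
      · linarith
    linarith
  refine ⟨fun lam _ => hdiff lam, hneg, ?_⟩
  exact strictAntiOn_of_deriv_neg (convex_Ici _)
    (fun x _ => (hdiff x).continuousAt.continuousWithinAt)
    (fun x hx => hneg x (le_of_lt (by rwa [interior_Ici] at hx)))
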